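/- Let φ : ℝ → ℝ be a homeomorphism with φ(0)=0 and f : [0,T]×ℝ×ℝ → ℝ continuous. Suppose: (1) there exists continuous c : [0,T] → ℝ with f(t,x,y) ≥ c(t) for all (t,x,y); (2) there exist M₁ < M₂ such that for all u ∈ C¹, if min u' ≥ M₂ then ∫₀ᵀ f(t,u,u') dt ≠ 0, and if max u' ≤ M₁ then ∫₀ᵀ f(t,u,u') dt ≠ 0. If λ ∈ (0,1) and u ∈ C¹ solves (φ(u'))' = λ f(t,u,u') with u(T) = u'(0) = u'(T), then ‖u‖_∞ + ‖u'‖_∞ < r(2+T), where L = max{|φ(M₂)|, |φ(M₁)|}, r = max{|φ⁻¹(L + 2‖c⁻‖_{L¹})|, |φ⁻¹(−L − 2‖c⁻‖_{L¹})|}, and c⁻ = max(−c, 0). -/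

import Mathlib

open Set MeasureTheory

lemma ftc15 {a b : ℝ} (hab : a ≤ b) (g g' : ℝ → ℝ)
    (h : ∀ t ∈ Set.Icc a b, HasDerivWithinAt g (g' t) (Set.Icc a b) t)
    (hc : ContinuousOn g' (Set.Icc a b)) :
    ∫ t in a..b, g' t = g b - g a := by
  apply intervalIntegral.integral_eq_sub_of_hasDeriv_right_of_le hab
  · exact fun x hx => (h x hx).continuousWithinAt
  · intro x hx
    exact (h x (Ioo_subset_Icc_self hx)).mono_of_mem_nhdsWithin
      (Icc_mem_nhdsGT_of_mem ⟨hx.1.le, hx.2⟩)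
  · exact hc.intervalIntegrable_of_Icc hab

lemma abs_lt_max15 {x a b : ℝ} (h1 : min a b < x) (h2 : x < max a b) :
    |x| < max |a| |b| := by
  rw [abs_lt]
  constructor
  · have ha : -(max |a| |b|) ≤ a := le_trans (neg_le_neg (le_max_left _ _)) (neg_abs_le a)
    have hb : -(max |a| |b|) ≤ b := le_trans (neg_le_neg (le_max_right _ _)) (neg_abs_le b)
    exact lt_of_le_of_lt (le_min ha hb) h1
  · exact lt_of_lt_of_le h2 (max_le_max (le_abs_self a) (le_abs_self b))

lemma btwn15 {g : ℝ → ℝ} (hg : StrictMono g ∨ StrictAnti g) {a x b : ℝ}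
    (h1 : a < x) (h2 : x < b) :
    min (g a) (g b) < g x ∧ g x < max (g a) (g b) := by
  rcases hg with h | h
  · exact ⟨lt_of_le_of_lt (min_le_left _ _) (h h1), lt_of_lt_of_le (h h2) (le_max_right _ _)⟩
  · exact ⟨lt_of_le_of_lt (min_le_right _ _) (h h2), lt_of_lt_of_le (h h1) (le_max_left _ _)⟩

lemma subint15 {a b c d : ℝ} (g : ℝ → ℝ) (hab : a ≤ b) (hca : c ≤ a) (hbd : b ≤ d)
    (hg : ContinuousOn g (Set.Icc c d)) (hgpos : ∀ t ∈ Set.Icc c d, 0 ≤ g t) :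
    ∫ t in a..b, g t ≤ ∫ t in c..d, g t := by
  rw [intervalIntegral.integral_of_le hab,
    intervalIntegral.integral_of_le (hca.trans (hab.trans hbd))]
  apply setIntegral_mono_set
  · exact (hg.integrableOn_Icc).mono_set Ioc_subset_Icc_self
  · exact ae_restrict_of_forall_mem measurableSet_Ioc
      (fun x hx => hgpos x (Ioc_subset_Icc_self hx))
  · exact (Ioc_subset_Ioc hca hbd).eventuallyLE

theorem stmt15 (T : ℝ) (hT : 0 < T)
    (φ : ℝ ≃ₜ ℝ) (hφ0 : φ 0 = 0)
    (f : ℝ → ℝ → ℝ → ℝ)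
    (hf : Continuous fun p : ℝ × ℝ × ℝ => f p.1 p.2.1 p.2.2)
    (c : ℝ → ℝ) (hcc : ContinuousOn c (Set.Icc 0 T))
    (hlb : ∀ t ∈ Set.Icc (0:ℝ) T, ∀ x y : ℝ, c t ≤ f t x y)
    (M₁ M₂ : ℝ) (hM : M₁ < M₂)
    (hyp2 : ∀ w w' : ℝ → ℝ,
      (∀ t ∈ Set.Icc (0:ℝ) T, HasDerivWithinAt w (w' t) (Set.Icc 0 T) t) →
      ContinuousOn w' (Set.Icc 0 T) →
      ((∀ t ∈ Set.Icc (0:ℝ) T, M₂ ≤ w' t) →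
        (∫ t in (0:ℝ)..T, f t (w t) (w' t)) ≠ 0) ∧
      ((∀ t ∈ Set.Icc (0:ℝ) T, w' t ≤ M₁) →
        (∫ t in (0:ℝ)..T, f t (w t) (w' t)) ≠ 0))
    (lam : ℝ) (hlam : 0 < lam ∧ lam < 1)
    (u u' v : ℝ → ℝ)
    (hu : ∀ t ∈ Set.Icc (0:ℝ) T, HasDerivWithinAt u (u' t) (Set.Icc 0 T) t)
    (hu'c : ContinuousOn u' (Set.Icc 0 T))
    (hv : ∀ t ∈ Set.Icc (0:ℝ) T,
      HasDerivWithinAt (fun s => φ (u' s)) (v t) (Set.Icc 0 T) t)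
    (hvc : ContinuousOn v (Set.Icc 0 T))
    (heq : ∀ t ∈ Set.Icc (0:ℝ) T, v t = lam * f t (u t) (u' t))
    (hbc : u T = u' 0 ∧ u' 0 = u' T) :
    sSup ((fun t => |u t|) '' Set.Icc 0 T) +
      sSup ((fun t => |u' t|) '' Set.Icc 0 T) <
    (max |φ.symm (max |φ M₂| |φ M₁| + 2 * ∫ t in (0:ℝ)..T, max (-c t) 0)|
        |φ.symm (-(max |φ M₂| |φ M₁| + 2 * ∫ t in (0:ℝ)..T, max (-c t) 0))|) *
      (2 + T) := by
  set F : ℝ → ℝ := fun t => f t (u t) (u' t) with hF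
  set L : ℝ := max |φ M₂| |φ M₁| with hL
  set K : ℝ := ∫ t in (0:ℝ)..T, max (-c t) 0 with hK
  set A : ℝ := L + 2 * K with hA
  set r : ℝ := max |φ.symm A| |φ.symm (-A)| with hr
  -- continuity facts
  have huc : ContinuousOn u (Set.Icc 0 T) := fun x hx => (hu x hx).continuousWithinAt
  have hFc : ContinuousOn F (Set.Icc 0 T) := by
    have : ContinuousOn (fun t : ℝ => (t, u t, u' t)) (Set.Icc 0 T) :=
      (continuousOn_id).prodMk (huc.prodMk hu'c)
    exact hf.comp_continuousOn this
  have hFi : IntervalIntegrable F volume 0 T := hFc.intervalIntegrable_of_Icc hT.le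
  have hcnegc : ContinuousOn (fun t => max (-c t) 0) (Set.Icc 0 T) :=
    (hcc.neg).sup continuousOn_const
  have hci : IntervalIntegrable (fun t => max (-c t) 0) volume 0 T :=
    hcnegc.intervalIntegrable_of_Icc hT.le
  -- Step 1: ∫ v = 0
  have hv0 : ∫ t in (0:ℝ)..T, v t = 0 := by
    rw [ftc15 hT.le _ v hv hvc, hbc.2, sub_self]
  -- Step 2: ∫ F = 0
  have hintF : ∫ t in (0:ℝ)..T, F t = 0 := by
    have h1 : ∫ t in (0:ℝ)..T, v t = lam * ∫ t in (0:ℝ)..T, F t := by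
      rw [← intervalIntegral.integral_const_mul]
      apply intervalIntegral.integral_congr
      intro t ht
      rw [Set.uIcc_of_le hT.le] at ht
      exact heq t ht
    rw [hv0] at h1
    rcases mul_eq_zero.mp h1.symm with h | h
    · exact absurd h (ne_of_gt hlam.1)
    · exact h
  -- Step 3: points where u' is below M₂ / above M₁
  obtain ⟨h1, h2⟩ := hyp2 u u' hu hu'c
  have ht1 : ∃ t ∈ Set.Icc (0:ℝ) T, u' t < M₂ := by
    by_contra h; push_neg at h; exact h1 (fun t ht => h t ht) hintF
  have ht2 : ∃ t ∈ Set.Icc (0:ℝ) T, M₁ < u' t := by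
    by_contra h; push_neg at h; exact h2 (fun t ht => h t ht) hintF
  obtain ⟨t₁, ht₁, hlt₁⟩ := ht1
  obtain ⟨t₂, ht₂, hlt₂⟩ := ht2
  -- Step 4: ω with M₁ < u' ω < M₂
  obtain ⟨ω, hωmem, hω1, hω2⟩ :
      ∃ ω ∈ Set.Icc (0:ℝ) T, M₁ < u' ω ∧ u' ω < M₂ := by
    rcases lt_or_ge M₁ (u' t₁) with h | h
    · exact ⟨t₁, ht₁, h, hlt₁⟩
    rcases lt_or_ge (u' t₂) M₂ with h' | h'
    · exact ⟨t₂, ht₂, hlt₂, h'⟩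
    have hsub : Set.uIcc t₁ t₂ ⊆ Set.Icc 0 T := Set.uIcc_subset_Icc ht₁ ht₂
    have hivt := intermediate_value_uIcc (hu'c.mono hsub)
    have hm : (M₁ + M₂) / 2 ∈ Set.uIcc (u' t₁) (u' t₂) := by
      rw [Set.mem_uIcc]
      left
      constructor <;> linarith
    obtain ⟨ω, hωm, hωv⟩ := hivt hm
    refine ⟨ω, hsub hωm, ?_, ?_⟩ <;> rw [hωv] <;> linarith
  -- monotonicity of φ and φ.symm
  have hmφ : StrictMono (φ : ℝ → ℝ) ∨ StrictAnti (φ : ℝ → ℝ) :=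
    φ.continuous.strictMono_of_inj φ.injective
  have hmψ : StrictMono (φ.symm : ℝ → ℝ) ∨ StrictAnti (φ.symm : ℝ → ℝ) :=
    φ.symm.continuous.strictMono_of_inj φ.symm.injective
  -- Step 5: |φ (u' ω)| < L
  have hLω : |φ (u' ω)| < L := by
    obtain ⟨hb1, hb2⟩ := btwn15 hmφ hω1 hω2
    have := abs_lt_max15 hb1 hb2
    rwa [max_comm] at this
  -- Step 6: ∫ |v| ≤ 2K
  have hKey : ∫ t in (0:ℝ)..T, |F t| ≤ 2 * K := by
    have hpt : ∀ t ∈ Set.Icc (0:ℝ) T, |F t| ≤ F t + 2 * max (-c t) 0 := by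
      intro t ht
      have h1 := hlb t ht (u t) (u' t)
      have h2 : -c t ≤ max (-c t) 0 := le_max_left _ _
      rcases abs_cases (F t) with ⟨h, _⟩ | ⟨h, _⟩ <;> rw [h]
      · nlinarith [le_max_right (-c t) (0:ℝ)]
      · simp only [hF] at h1 ⊢; nlinarith
    have h := intervalIntegral.integral_mono_on hT.le hFi.abs
      (hFi.add (hci.const_mul 2)) hpt
    rw [intervalIntegral.integral_add hFi (hci.const_mul 2), hintF,
      intervalIntegral.integral_const_mul] at h
    linarith
  have hvbound : ∫ t in (0:ℝ)..T, |v t| ≤ 2 * K := by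
    refine le_trans (intervalIntegral.integral_mono_on hT.le
      (hvc.abs.intervalIntegrable_of_Icc hT.le) hFi.abs ?_) hKey
    intro t ht
    rw [heq t ht, abs_mul, abs_of_pos hlam.1]
    nlinarith [abs_nonneg (F t), hlam.2.le, hlam.1.le]
  -- Step 7: |φ (u' t)| < A for t ∈ [0,T]
  have hAbd : ∀ t ∈ Set.Icc (0:ℝ) T, |φ (u' t)| < A := by
    intro t ht
    have hdiff : |φ (u' t) - φ (u' ω)| ≤ 2 * K := by
      rcases le_total ω t with h | h
      · have hsub : Set.Icc ω t ⊆ Set.Icc 0 T := Set.Icc_subset_Icc hωmem.1 ht.2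
        have hftc := ftc15 h (fun s => φ (u' s)) v
          (fun s hs => (hv s (hsub hs)).mono hsub) (hvc.mono hsub)
        rw [← hftc]
        calc |∫ s in ω..t, v s| ≤ ∫ s in ω..t, |v s| :=
              intervalIntegral.abs_integral_le_integral_abs h
          _ ≤ ∫ s in (0:ℝ)..T, |v s| :=
              subint15 _ h hωmem.1 ht.2 hvc.abs (fun s _ => abs_nonneg _)
          _ ≤ 2 * K := hvbound
      · have hsub : Set.Icc t ω ⊆ Set.Icc 0 T := Set.Icc_subset_Icc ht.1 hωmem.2
        have hftc := ftc15 h (fun s => φ (u' s)) v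
          (fun s hs => (hv s (hsub hs)).mono hsub) (hvc.mono hsub)
        rw [abs_sub_comm, ← hftc]
        calc |∫ s in t..ω, v s| ≤ ∫ s in t..ω, |v s| :=
              intervalIntegral.abs_integral_le_integral_abs h
          _ ≤ ∫ s in (0:ℝ)..T, |v s| :=
              subint15 _ h ht.1 hωmem.2 hvc.abs (fun s _ => abs_nonneg _)
          _ ≤ 2 * K := hvbound
    have htri : |φ (u' t)| ≤ |φ (u' t) - φ (u' ω)| + |φ (u' ω)| := by
      have h := abs_add_le (φ (u' t) - φ (u' ω)) (φ (u' ω))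
      simpa using h
    calc |φ (u' t)| ≤ |φ (u' t) - φ (u' ω)| + |φ (u' ω)| := htri
      _ < 2 * K + L := by linarith
      _ = A := by rw [hA]; ring
  -- Step 8: |u' t| < r for t ∈ [0,T]
  have hrbd : ∀ t ∈ Set.Icc (0:ℝ) T, |u' t| < r := by
    intro t ht
    have h := hAbd t ht
    rw [abs_lt] at h
    obtain ⟨hb1, hb2⟩ := btwn15 hmψ h.1 h.2
    rw [φ.symm_apply_apply] at hb1 hb2
    have := abs_lt_max15 hb1 hb2
    rwa [max_comm] at this
  have hr0 : 0 < r := lt_of_le_of_lt (abs_nonneg (u' 0)) (hrbd 0 ⟨le_refl 0, hT.le⟩)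
  -- Step 9: |u t| < r * (1 + T)
  have hubd : ∀ t ∈ Set.Icc (0:ℝ) T, |u t| < r * (1 + T) := by
    intro t ht
    have hsub : Set.Icc t T ⊆ Set.Icc 0 T := Set.Icc_subset_Icc ht.1 le_rfl
    have hftc := ftc15 ht.2 u u' (fun s hs => (hu s (hsub hs)).mono hsub) (hu'c.mono hsub)
    have hint : |∫ s in t..T, u' s| ≤ r * T := by
      calc |∫ s in t..T, u' s| ≤ ∫ s in t..T, |u' s| :=
            intervalIntegral.abs_integral_le_integral_abs ht.2
        _ ≤ ∫ s in (0:ℝ)..T, |u' s| :=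
            subint15 _ ht.2 ht.1 le_rfl hu'c.abs (fun s _ => abs_nonneg _)
        _ ≤ ∫ _ in (0:ℝ)..T, r :=
            intervalIntegral.integral_mono_on hT.le
              (hu'c.abs.intervalIntegrable_of_Icc hT.le) intervalIntegrable_const
              (fun s hs => (hrbd s hs).le)
        _ = r * T := by rw [intervalIntegral.integral_const]; simp [smul_eq_mul]; ring
    have huT : |u T| < r := by rw [hbc.1]; exact hrbd 0 ⟨le_refl 0, hT.le⟩
    have : u t = u T - ∫ s in t..T, u' s := by rw [hftc]; ring
    rw [this]
    calc |u T - ∫ s in t..T, u' s| ≤ |u T| + |∫ s in t..T, u' s| := abs_sub _ _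
      _ < r + r * T := by linarith
      _ = r * (1 + T) := by ring
  -- conclude
  have hne : (Set.Icc (0:ℝ) T).Nonempty := Set.nonempty_Icc.mpr hT.le
  have hS1 : sSup ((fun t => |u t|) '' Set.Icc 0 T) < r * (1 + T) := by
    obtain ⟨t0, ht0, hmax'⟩ := isCompact_Icc.exists_isMaxOn hne huc.abs
    have hmax := isMaxOn_iff.mp hmax'
    have : sSup ((fun t => |u t|) '' Set.Icc 0 T) ≤ |u t0| :=
      csSup_le (hne.image _) (by rintro y ⟨s, hs, rfl⟩; exact hmax s hs)
    exact lt_of_le_of_lt this (hubd t0 ht0)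
  have hS2 : sSup ((fun t => |u' t|) '' Set.Icc 0 T) < r := by
    obtain ⟨t0, ht0, hmax'⟩ := isCompact_Icc.exists_isMaxOn hne hu'c.abs
    have hmax := isMaxOn_iff.mp hmax'
    have : sSup ((fun t => |u' t|) '' Set.Icc 0 T) ≤ |u' t0| :=
      csSup_le (hne.image _) (by rintro y ⟨s, hs, rfl⟩; exact hmax s hs)
    exact lt_of_le_of_lt this (hrbd t0 ht0)
  calc sSup ((fun t => |u t|) '' Set.Icc 0 T) + sSup ((fun t => |u' t|) '' Set.Icc 0 T)
      < r * (1 + T) + r := by linarith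
    _ = r * (2 + T) := by ring
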